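/- Let g be the semidirect product Lie algebra gl₂ ⋉ V_{k+1}, where gl₂ acts on homogeneous polynomials of degree k+1 by derivations, V_{k+1} is abelian, and set g₁ = ℂY, g₀ = ℂH + ℂZ, g₋₁ = ℂX + ℂv_{k+1}, and g₋ᵢ = ℂv_{k+2−i} for 2 ≤ i ≤ k+2. Then this decomposition is a Lie algebra gradation: [gᵢ, gⱼ] ⊆ g_{i+j} for all i, j (with g_m = 0 when m is outside the range [−k−2, 1]). -/

import Mathlib

/- STATEMENT 4: g = gl₂ ⋉ V_{k+1} with the gradation g₁ = ℂY, g₀ = ℂH + ℂZ,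
g₋₁ = ℂX + ℂv_{k+1}, g₋ᵢ = ℂv_{k+2−i} (2 ≤ i ≤ k+2) is a graded Lie algebra:
[gᵢ, gⱼ] ⊆ g_{i+j} (with g_m = 0 outside [−k−2, 1]).
We realize g faithfully as matrices acting on V_{k+1} ⊕ ℂ (basis v₀,…,v_{k+1} of V_{k+1},
last coordinate for ℂ): a pair (A, p) acts by (w, c) ↦ (A·w + c·p, 0), which identifies the
semidirect product bracket [(A,p),(B,q)] = ([A,B], A(q) − B(p)) with the matrix commutator.
X, Y, H, Z act on the basis by X v_i = v_{i−1}, Y v_i = (k+1−i)(i+1) v_{i+1},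
H v_i = (k+1−2i) v_i, Z v_i = (k+1) v_i. -/

noncomputable section

def MX (k : ℕ) : Matrix (Fin (k+3)) (Fin (k+3)) ℂ :=
  Matrix.of fun r c => if r.val + 1 = c.val ∧ c.val ≤ k + 1 then 1 else 0
def MY (k : ℕ) : Matrix (Fin (k+3)) (Fin (k+3)) ℂ :=
  Matrix.of fun r c =>
    if r.val = c.val + 1 ∧ r.val ≤ k + 1 then (((k + 1 - c.val) * (c.val + 1) : ℕ) : ℂ) else 0
def MH (k : ℕ) : Matrix (Fin (k+3)) (Fin (k+3)) ℂ :=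
  Matrix.of fun r c => if r = c ∧ r.val ≤ k + 1 then ((k : ℂ) + 1 - 2 * (r.val : ℂ)) else 0
def MZ (k : ℕ) : Matrix (Fin (k+3)) (Fin (k+3)) ℂ :=
  Matrix.of fun r c => if r = c ∧ r.val ≤ k + 1 then ((k : ℂ) + 1) else 0
/-- The element v_j of the abelian ideal V_{k+1}. -/
def Mv (k : ℕ) (j : ℕ) : Matrix (Fin (k+3)) (Fin (k+3)) ℂ :=
  Matrix.of fun r c => if r.val = j ∧ c.val = k + 2 then 1 else 0

/-- The gradation of g = gl₂ ⋉ V_{k+1}. -/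
def gr (k : ℕ) : ℤ → Submodule ℂ (Matrix (Fin (k+3)) (Fin (k+3)) ℂ) := fun i =>
  if i = 1 then Submodule.span ℂ {MY k}
  else if i = 0 then Submodule.span ℂ {MH k, MZ k}
  else if i = -1 then Submodule.span ℂ {MX k, Mv k (k+1)}
  else if -(k : ℤ) - 2 ≤ i ∧ i ≤ -2 then Submodule.span ℂ {Mv k (k + 2 - i.natAbs)}
  else ⊥

section
attribute [local instance] LieRing.ofAssociativeRing

-- sum helpers
lemma sum_pin {n : ℕ} (f : Fin n → ℂ) (t : ℕ) (ht : t < n)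
    (h : ∀ s : Fin n, s.val ≠ t → f s = 0) : ∑ s, f s = f ⟨t, ht⟩ := by
  apply Finset.sum_eq_single_of_mem _ (Finset.mem_univ _)
  intro s _ hs
  exact h s (fun hv => hs (Fin.ext hv))

lemma sum_zero' {n : ℕ} (f : Fin n → ℂ) (h : ∀ s : Fin n, f s = 0) : ∑ s, f s = 0 :=
  Finset.sum_eq_zero fun s _ => h s

-- diagonal forms
lemma MH_diag (k : ℕ) : MH k = Matrix.diagonal
    (fun r : Fin (k+3) => if r.val ≤ k + 1 then ((k : ℂ) + 1 - 2 * (r.val : ℂ)) else 0) := by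
  ext r c
  simp only [MH, Matrix.of_apply, Matrix.diagonal_apply]
  split_ifs with h1 h2 h3 h2 h3 <;> tauto

lemma MZ_diag (k : ℕ) : MZ k = Matrix.diagonal
    (fun r : Fin (k+3) => if r.val ≤ k + 1 then ((k : ℂ) + 1) else 0) := by
  ext r c
  simp only [MZ, Matrix.of_apply, Matrix.diagonal_apply]
  split_ifs with h1 h2 h3 h2 h3 <;> tauto

-- multiplication by Mv on the right
lemma mul_Mv (k : ℕ) (A : Matrix (Fin (k+3)) (Fin (k+3)) ℂ) (j : ℕ) (hj : j < k + 3) :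
    A * Mv k j = Matrix.of fun r c => if c.val = k + 2 then A r ⟨j, hj⟩ else 0 := by
  ext r c
  simp only [Matrix.mul_apply, Mv, Matrix.of_apply]
  by_cases hc : c.val = k + 2
  · rw [sum_pin _ j hj]
    · simp [hc]
    · intro s hs; simp [hs]
  · rw [if_neg hc]; apply sum_zero'; intro s; simp [hc]

lemma Mv_mul (k : ℕ) (A : Matrix (Fin (k+3)) (Fin (k+3)) ℂ)
    (hA : ∀ c, A ⟨k+2, by omega⟩ c = 0) (j : ℕ) : Mv k j * A = 0 := by
  ext r c
  simp only [Matrix.mul_apply, Mv, Matrix.of_apply, Matrix.zero_apply]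
  apply sum_zero'; intro s
  by_cases hs : s.val = k + 2
  · have : s = ⟨k+2, by omega⟩ := Fin.ext hs
    rw [this, hA]; simp
  · simp [hs]

-- last rows vanish
lemma MX_lastrow (k : ℕ) : ∀ c, MX k ⟨k+2, by omega⟩ c = 0 := by
  intro c; simp only [MX, Matrix.of_apply]
  have : c.val ≤ k + 2 := by omega
  split_ifs with h <;> first | omega | rfl
lemma MY_lastrow (k : ℕ) : ∀ c, MY k ⟨k+2, by omega⟩ c = 0 := by
  intro c; simp only [MY, Matrix.of_apply]
  split_ifs with h <;> first | omega | rfl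
lemma MH_lastrow (k : ℕ) : ∀ c, MH k ⟨k+2, by omega⟩ c = 0 := by
  intro c; simp only [MH, Matrix.of_apply]
  split_ifs with h <;> first | (exfalso; omega) | rfl
lemma MZ_lastrow (k : ℕ) : ∀ c, MZ k ⟨k+2, by omega⟩ c = 0 := by
  intro c; simp only [MZ, Matrix.of_apply]
  split_ifs with h <;> first | (exfalso; omega) | rfl
lemma Mv_lastrow (k : ℕ) (j : ℕ) (hj : j ≤ k + 1) : ∀ c, Mv k j ⟨k+2, by omega⟩ c = 0 := by
  intro c; simp only [Mv, Matrix.of_apply]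
  split_ifs with h <;> first | omega | rfl

-- products with Mv
lemma MvMv (k a b : ℕ) (hb : b ≤ k + 1) : Mv k a * Mv k b = 0 :=
  Mv_mul k (Mv k b) (Mv_lastrow k b hb) a

lemma MX_Mv (k j : ℕ) (h1 : 1 ≤ j) (h2 : j ≤ k + 1) : MX k * Mv k j = Mv k (j - 1) := by
  rw [mul_Mv k _ j (by omega)]
  ext r c
  simp only [Matrix.of_apply, MX, Mv]
  split_ifs <;> first | rfl | omega

lemma MX_Mv0 (k : ℕ) : MX k * Mv k 0 = 0 := by
  rw [mul_Mv k _ 0 (by omega)]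
  ext r c
  simp only [Matrix.of_apply, MX, Matrix.zero_apply]
  split_ifs with h1 h2 <;> try rfl
  exact absurd h2.1 (by simp)

lemma MY_Mv (k j : ℕ) (h2 : j ≤ k + 1) :
    MY k * Mv k j = (((k + 1 - j) * (j + 1) : ℕ) : ℂ) • Mv k (j + 1) := by
  rw [mul_Mv k _ j (by omega)]
  ext r c
  simp only [Matrix.of_apply, MY, Mv, Matrix.smul_apply, smul_eq_mul]
  by_cases hc : (c : ℕ) = k + 2
  · by_cases hr : (r : ℕ) = j + 1
    · by_cases hj : j ≤ k
      · rw [if_pos hc, if_pos (show (r:ℕ) = j + 1 ∧ (r:ℕ) ≤ k + 1 from ⟨hr, by omega⟩),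
          if_pos ⟨hr, hc⟩, mul_one]
      · have hj' : j = k + 1 := by omega
        rw [if_pos hc, if_neg (show ¬((r:ℕ) = j + 1 ∧ (r:ℕ) ≤ k + 1) by omega),
          if_pos ⟨hr, hc⟩, mul_one, hj']
        norm_num
    · rw [if_pos hc, if_neg (show ¬((r:ℕ) = j + 1 ∧ (r:ℕ) ≤ k + 1) from fun h => hr h.1),
        if_neg (show ¬((r:ℕ) = j + 1 ∧ (c:ℕ) = k + 2) from fun h => hr h.1), mul_zero]
  · rw [if_neg hc, if_neg (show ¬((r:ℕ) = j + 1 ∧ (c:ℕ) = k + 2) from fun h => hc h.2),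
      mul_zero]

lemma MH_Mv (k j : ℕ) (h2 : j ≤ k + 1) :
    MH k * Mv k j = ((k : ℂ) + 1 - 2 * (j : ℂ)) • Mv k j := by
  rw [mul_Mv k _ j (by omega)]
  ext r c
  simp only [Matrix.of_apply, MH, Mv, Matrix.smul_apply, smul_eq_mul, Fin.ext_iff]
  split_ifs <;> simp_all <;> omega

lemma MZ_Mv (k j : ℕ) (h2 : j ≤ k + 1) :
    MZ k * Mv k j = ((k : ℂ) + 1) • Mv k j := by
  rw [mul_Mv k _ j (by omega)]
  ext r c
  simp only [Matrix.of_apply, MZ, Mv, Matrix.smul_apply, smul_eq_mul, Fin.ext_iff]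
  split_ifs <;> simp_all <;> omega

-- gl2 relations
lemma YH (k : ℕ) : MY k * MH k - MH k * MY k = (2:ℂ) • MY k := by
  rw [MH_diag]
  ext r c
  simp only [Matrix.sub_apply, Matrix.mul_diagonal, Matrix.diagonal_mul, MY, Matrix.of_apply,
    Matrix.smul_apply, smul_eq_mul]
  by_cases h : (r : ℕ) = (c : ℕ) + 1 ∧ (r : ℕ) ≤ k + 1
  · rw [if_pos h, if_pos (show (c:ℕ) ≤ k + 1 by omega), if_pos h.2]
    have hc : (r : ℕ) = (c : ℕ) + 1 := h.1
    have : ((r:ℕ) : ℂ) = ((c:ℕ) : ℂ) + 1 := by exact_mod_cast hc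
    rw [this]; ring
  · rw [if_neg h]; ring

lemma YZ (k : ℕ) : MY k * MZ k - MZ k * MY k = 0 := by
  rw [MZ_diag]
  ext r c
  simp only [Matrix.sub_apply, Matrix.mul_diagonal, Matrix.diagonal_mul, MY, Matrix.of_apply,
    Matrix.zero_apply]
  by_cases h : (r : ℕ) = (c : ℕ) + 1 ∧ (r : ℕ) ≤ k + 1
  · rw [if_pos h, if_pos (show (c:ℕ) ≤ k + 1 by omega), if_pos h.2]; ring
  · rw [if_neg h]; ring

lemma HX (k : ℕ) : MH k * MX k - MX k * MH k = (2:ℂ) • MX k := by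
  rw [MH_diag]
  ext r c
  simp only [Matrix.sub_apply, Matrix.mul_diagonal, Matrix.diagonal_mul, MX, Matrix.of_apply,
    Matrix.smul_apply, smul_eq_mul]
  by_cases h : (r : ℕ) + 1 = (c : ℕ) ∧ (c : ℕ) ≤ k + 1
  · rw [if_pos h, if_pos (show (r:ℕ) ≤ k + 1 by omega), if_pos h.2]
    have : ((c:ℕ) : ℂ) = ((r:ℕ) : ℂ) + 1 := by exact_mod_cast h.1.symm
    rw [this]; ring
  · rw [if_neg h]; ring

lemma ZX (k : ℕ) : MZ k * MX k - MX k * MZ k = 0 := by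
  rw [MZ_diag]
  ext r c
  simp only [Matrix.sub_apply, Matrix.mul_diagonal, Matrix.diagonal_mul, MX, Matrix.of_apply,
    Matrix.zero_apply]
  by_cases h : (r : ℕ) + 1 = (c : ℕ) ∧ (c : ℕ) ≤ k + 1
  · rw [if_pos h, if_pos (show (r:ℕ) ≤ k + 1 by omega), if_pos h.2]; ring
  · rw [if_neg h]; ring

lemma HZ (k : ℕ) : MH k * MZ k - MZ k * MH k = 0 := by
  rw [MH_diag, MZ_diag, Matrix.diagonal_mul_diagonal, Matrix.diagonal_mul_diagonal]
  rw [sub_eq_zero]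
  ext i j
  simp only [Matrix.diagonal_apply]
  split_ifs <;> ring

lemma MX_apply (k : ℕ) (r c : Fin (k+3)) :
    MX k r c = if (r:ℕ) + 1 = (c:ℕ) ∧ (c:ℕ) ≤ k + 1 then 1 else 0 := rfl
lemma MY_apply (k : ℕ) (r c : Fin (k+3)) :
    MY k r c = if (r:ℕ) = (c:ℕ) + 1 ∧ (r:ℕ) ≤ k + 1
      then (((k + 1 - (c:ℕ)) * ((c:ℕ) + 1) : ℕ) : ℂ) else 0 := rfl
lemma MH_apply (k : ℕ) (r c : Fin (k+3)) :
    MH k r c = if r = c ∧ (r:ℕ) ≤ k + 1 then ((k : ℂ) + 1 - 2 * ((r:ℕ) : ℂ)) else 0 := rfl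

lemma XY (k : ℕ) : MX k * MY k - MY k * MX k = MH k := by
  ext r c
  simp only [Matrix.sub_apply, Matrix.mul_apply]
  have e1 : ∑ s, MX k r s * MY k s c =
      if h : (r : ℕ) ≤ k then MY k ⟨(r:ℕ)+1, by omega⟩ c else 0 := by
    by_cases hr : (r : ℕ) ≤ k
    · rw [dif_pos hr, sum_pin _ ((r:ℕ)+1) (by omega)]
      · rw [MX_apply,
          if_pos (show (r:ℕ) + 1 = (r:ℕ) + 1 ∧ (r:ℕ) + 1 ≤ k + 1 from ⟨rfl, by omega⟩), one_mul]
      · intro s hs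
        rw [MX_apply, if_neg (fun hc => hs hc.1.symm), zero_mul]
    · rw [dif_neg hr]
      apply sum_zero'; intro s
      have : ¬((r:ℕ) + 1 = (s:ℕ) ∧ (s:ℕ) ≤ k + 1) := by omega
      rw [MX_apply, if_neg this, zero_mul]
  have e2 : ∑ s, MY k r s * MX k s c =
      if h : 1 ≤ (r : ℕ) ∧ (r : ℕ) ≤ k + 1 then
        MY k r ⟨(r:ℕ)-1, by omega⟩ * MX k ⟨(r:ℕ)-1, by omega⟩ c else 0 := by
    by_cases hr : 1 ≤ (r : ℕ) ∧ (r : ℕ) ≤ k + 1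
    · rw [dif_pos hr, sum_pin _ ((r:ℕ)-1) (by omega)]
      intro s hs
      have : ¬((r:ℕ) = (s:ℕ) + 1 ∧ (r:ℕ) ≤ k + 1) := fun hc => hs (by omega)
      rw [MY_apply, if_neg this, zero_mul]
    · rw [dif_neg hr]
      apply sum_zero'; intro s
      have : ¬((r:ℕ) = (s:ℕ) + 1 ∧ (r:ℕ) ≤ k + 1) := by omega
      rw [MY_apply, if_neg this, zero_mul]
  rw [e1, e2, MH_apply]
  by_cases hrc : (r : ℕ) = (c : ℕ)
  · obtain rfl : r = c := Fin.ext hrc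
    by_cases h1 : (r : ℕ) ≤ k
    · by_cases h0 : 1 ≤ (r : ℕ)
      · rw [dif_pos h1, dif_pos (show 1 ≤ (r:ℕ) ∧ (r:ℕ) ≤ k + 1 from ⟨h0, by omega⟩),
          if_pos ⟨rfl, by omega⟩, MY_apply, MY_apply, MX_apply,
          if_pos (show (r:ℕ) + 1 = (r:ℕ) + 1 ∧ (r:ℕ) + 1 ≤ k + 1 from ⟨rfl, by omega⟩),
          if_pos (show (r:ℕ) = (r:ℕ) - 1 + 1 ∧ (r:ℕ) ≤ k + 1 from ⟨by omega, by omega⟩),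
          if_pos (show (r:ℕ) - 1 + 1 = (r:ℕ) ∧ (r:ℕ) ≤ k + 1 from ⟨by omega, by omega⟩), mul_one]
        rw [Nat.sub_add_cancel h0, Nat.cast_mul, Nat.cast_mul,
          Nat.cast_sub (show (r:ℕ) ≤ k + 1 by omega),
          Nat.cast_sub (show (r:ℕ) - 1 ≤ k + 1 by omega), Nat.cast_sub h0]
        push_cast
        ring
      · have h0' : (r : ℕ) = 0 := by omega
        rw [dif_pos h1, dif_neg (by omega), sub_zero, if_pos ⟨rfl, by omega⟩, MY_apply,
          if_pos (show (r:ℕ) + 1 = (r:ℕ) + 1 ∧ (r:ℕ) + 1 ≤ k + 1 from ⟨rfl, by omega⟩)]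
        rw [h0']
        push_cast
        ring
    · by_cases h2 : (r : ℕ) ≤ k + 1
      · have hr' : (r : ℕ) = k + 1 := by omega
        rw [dif_neg h1, dif_pos (show 1 ≤ (r:ℕ) ∧ (r:ℕ) ≤ k + 1 from ⟨by omega, h2⟩),
          if_pos ⟨rfl, h2⟩, MY_apply, MX_apply,
          if_pos (show (r:ℕ) = (r:ℕ) - 1 + 1 ∧ (r:ℕ) ≤ k + 1 from ⟨by omega, h2⟩),
          if_pos (show (r:ℕ) - 1 + 1 = (r:ℕ) ∧ (r:ℕ) ≤ k + 1 from ⟨by omega, h2⟩), mul_one]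
        rw [show k + 1 - ((r:ℕ) - 1) = 1 by omega, show (r:ℕ) - 1 + 1 = k + 1 by omega, hr']
        push_cast
        ring
      · rw [dif_neg h1, dif_neg (by omega), if_neg (show ¬(r = r ∧ (r:ℕ) ≤ k + 1) from fun h => by omega), sub_zero]
  · have hne : ¬(r = c) := fun h => hrc (by rw [h])
    rw [if_neg (fun h => hne h.1)]
    have z1 : (if h : (r : ℕ) ≤ k then MY k ⟨(r:ℕ)+1, by omega⟩ c else 0) = 0 := by
      by_cases hr : (r : ℕ) ≤ k
      · rw [dif_pos hr, MY_apply,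
          if_neg (show ¬((r:ℕ) + 1 = (c:ℕ) + 1 ∧ (r:ℕ) + 1 ≤ k + 1) from fun h => hrc (by omega))]
      · rw [dif_neg hr]
    rw [z1, zero_sub, neg_eq_zero]
    by_cases hr : 1 ≤ (r : ℕ) ∧ (r : ℕ) ≤ k + 1
    · rw [dif_pos hr, MX_apply, if_neg (show ¬((r:ℕ) - 1 + 1 = (c:ℕ) ∧ (c:ℕ) ≤ k + 1) from fun h => hrc (by omega)), mul_zero]
    · rw [dif_neg hr]

abbrev Mat (k : ℕ) := Matrix (Fin (k+3)) (Fin (k+3)) ℂ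

lemma span_lie {k : ℕ} (p : Submodule ℂ (Mat k)) (s t : Set (Mat k))
    (h : ∀ x ∈ s, ∀ y ∈ t, ⁅x, y⁆ ∈ p) :
    ∀ a ∈ Submodule.span ℂ s, ∀ b ∈ Submodule.span ℂ t, ⁅a, b⁆ ∈ p := by
  intro a ha
  induction ha using Submodule.span_induction with
  | mem x hx =>
    intro b hb
    induction hb using Submodule.span_induction with
    | mem y hy => exact h x hx y hy
    | zero => simpa using p.zero_mem
    | add y z _ _ hy hz => rw [lie_add]; exact p.add_mem hy hz
    | smul c y _ hy => rw [lie_smul]; exact p.smul_mem c hy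
  | zero => intro b hb; simpa using p.zero_mem
  | add x y _ _ hx hy => intro b hb; rw [add_lie]; exact p.add_mem (hx b hb) (hy b hb)
  | smul c x _ hx => intro b hb; rw [smul_lie]; exact p.smul_mem c (hx b hb)

lemma gr_one (k : ℕ) : gr k 1 = Submodule.span ℂ {MY k} := if_pos rfl
lemma gr_zero (k : ℕ) : gr k 0 = Submodule.span ℂ {MH k, MZ k} := by norm_num [gr]
lemma gr_neg_one (k : ℕ) : gr k (-1) = Submodule.span ℂ {MX k, Mv k (k+1)} := by norm_num [gr]
lemma gr_low (k : ℕ) (i : ℤ) (h1 : i ≤ -2) (h2 : -(k:ℤ) - 2 ≤ i) :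
    gr k i = Submodule.span ℂ {Mv k (k + 2 - i.natAbs)} := by
  rw [gr, if_neg (by omega), if_neg (by omega), if_neg (by omega), if_pos ⟨h2, h1⟩]
lemma gr_bot (k : ℕ) (i : ℤ) (h : 1 < i ∨ i < -(k:ℤ) - 2) :
    gr k i = ⊥ := by
  rw [gr, if_neg (by omega), if_neg (by omega), if_neg (by omega), if_neg (by omega)]

-- bracket corollaries
lemma lYH (k : ℕ) : ⁅MY k, MH k⁆ = (2:ℂ) • MY k := by rw [Ring.lie_def]; exact YH k
lemma lYZ (k : ℕ) : ⁅MY k, MZ k⁆ = 0 := by rw [Ring.lie_def]; exact YZ k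
lemma lXY (k : ℕ) : ⁅MX k, MY k⁆ = MH k := by rw [Ring.lie_def]; exact XY k
lemma lHX (k : ℕ) : ⁅MH k, MX k⁆ = (2:ℂ) • MX k := by rw [Ring.lie_def]; exact HX k
lemma lZX (k : ℕ) : ⁅MZ k, MX k⁆ = 0 := by rw [Ring.lie_def]; exact ZX k
lemma lHZ (k : ℕ) : ⁅MH k, MZ k⁆ = 0 := by rw [Ring.lie_def]; exact HZ k

lemma lXv (k j : ℕ) (h1 : 1 ≤ j) (h2 : j ≤ k + 1) : ⁅MX k, Mv k j⁆ = Mv k (j-1) := by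
  rw [Ring.lie_def, Mv_mul k (MX k) (MX_lastrow k) j, sub_zero, MX_Mv k j h1 h2]
lemma lXv0 (k : ℕ) : ⁅MX k, Mv k 0⁆ = 0 := by
  rw [Ring.lie_def, Mv_mul k (MX k) (MX_lastrow k) 0, sub_zero, MX_Mv0 k]
lemma lYv (k j : ℕ) (h2 : j ≤ k + 1) :
    ⁅MY k, Mv k j⁆ = (((k + 1 - j) * (j + 1) : ℕ) : ℂ) • Mv k (j + 1) := by
  rw [Ring.lie_def, Mv_mul k (MY k) (MY_lastrow k) j, sub_zero, MY_Mv k j h2]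
lemma lYv_top (k : ℕ) : ⁅MY k, Mv k (k+1)⁆ = 0 := by
  rw [lYv k (k+1) le_rfl, Nat.sub_self, zero_mul, Nat.cast_zero, zero_smul]
lemma lHv (k j : ℕ) (h2 : j ≤ k + 1) :
    ⁅MH k, Mv k j⁆ = ((k : ℂ) + 1 - 2 * (j : ℂ)) • Mv k j := by
  rw [Ring.lie_def, Mv_mul k (MH k) (MH_lastrow k) j, sub_zero, MH_Mv k j h2]
lemma lZv (k j : ℕ) (h2 : j ≤ k + 1) :
    ⁅MZ k, Mv k j⁆ = ((k : ℂ) + 1) • Mv k j := by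
  rw [Ring.lie_def, Mv_mul k (MZ k) (MZ_lastrow k) j, sub_zero, MZ_Mv k j h2]
lemma lvv (k a b : ℕ) (ha : a ≤ k + 1) (hb : b ≤ k + 1) : ⁅Mv k a, Mv k b⁆ = 0 := by
  rw [Ring.lie_def, MvMv k a b hb, MvMv k b a ha, sub_zero]

end

theorem stmt4 (k : ℕ) (hk : 2 ≤ k) :
    ∀ i j : ℤ, ∀ a ∈ gr k i, ∀ b ∈ gr k j, ⁅a, b⁆ ∈ gr k (i + j) := by
  letI := LieRing.ofAssociativeRing (A := Mat k)
  have mY : MY k ∈ Submodule.span ℂ {MY k} := Submodule.mem_span_singleton_self _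
  have mH : MH k ∈ Submodule.span ℂ {MH k, MZ k} := Submodule.subset_span (by simp)
  have mZ : MZ k ∈ Submodule.span ℂ {MH k, MZ k} := Submodule.subset_span (by simp)
  have mX : MX k ∈ Submodule.span ℂ {MX k, Mv k (k+1)} := Submodule.subset_span (by simp)
  have mv : Mv k (k+1) ∈ Submodule.span ℂ {MX k, Mv k (k+1)} := Submodule.subset_span (by simp)
  intro i j a ha b hb
  by_cases hib : 1 < i ∨ i < -(k:ℤ) - 2
  · rw [gr_bot k i hib, Submodule.mem_bot] at ha
    subst ha; rw [zero_lie]; exact Submodule.zero_mem _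
  by_cases hjb : 1 < j ∨ j < -(k:ℤ) - 2
  · rw [gr_bot k j hjb, Submodule.mem_bot] at hb
    subst hb; rw [lie_zero]; exact Submodule.zero_mem _
  push_neg at hib hjb
  obtain ⟨hi1, hi2⟩ := hib
  obtain ⟨hj1, hj2⟩ := hjb
  have hi : i = 1 ∨ i = 0 ∨ i = -1 ∨ (-(k:ℤ) - 2 ≤ i ∧ i ≤ -2) := by omega
  have hj : j = 1 ∨ j = 0 ∨ j = -1 ∨ (-(k:ℤ) - 2 ≤ j ∧ j ≤ -2) := by omega
  rcases hi with rfl | rfl | rfl | ⟨hia, hib'⟩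
  · -- i = 1
    rw [gr_one] at ha
    rcases hj with rfl | rfl | rfl | ⟨hja, hjb'⟩
    · -- (1,1)
      refine span_lie _ _ _ ?_ a ha b (by rwa [gr_one] at hb)
      intro x hx y hy
      simp only [Set.mem_singleton_iff] at hx hy; subst hx; subst hy
      rw [lie_self]; exact Submodule.zero_mem _
    · -- (1,0)
      rw [gr_zero] at hb
      refine span_lie _ _ _ ?_ a ha b hb
      intro x hx y hy
      simp only [Set.mem_singleton_iff, Set.mem_insert_iff] at hx hy
      subst hx
      rw [show (1:ℤ) + 0 = 1 from rfl, gr_one]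
      rcases hy with rfl | rfl
      · rw [lYH]; exact Submodule.smul_mem _ _ mY
      · rw [lYZ]; exact Submodule.zero_mem _
    · -- (1,-1)
      rw [gr_neg_one] at hb
      refine span_lie _ _ _ ?_ a ha b hb
      intro x hx y hy
      simp only [Set.mem_singleton_iff, Set.mem_insert_iff] at hx hy
      subst hx
      rw [show (1:ℤ) + -1 = 0 from rfl, gr_zero]
      rcases hy with rfl | rfl
      · rw [← lie_skew, lXY]; exact Submodule.neg_mem _ mH
      · rw [lYv_top]; exact Submodule.zero_mem _
    · -- (1, low)
      rw [gr_low k j hjb' hja] at hb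
      refine span_lie _ _ _ ?_ a ha b hb
      intro x hx y hy
      simp only [Set.mem_singleton_iff] at hx hy; subst hx; subst hy
      rw [lYv k _ (show k + 2 - j.natAbs ≤ k + 1 by omega)]
      apply Submodule.smul_mem
      by_cases h2 : j = -2
      · subst h2
        rw [show (1:ℤ) + -2 = -1 from rfl, gr_neg_one,
          show k + 2 - (-2:ℤ).natAbs + 1 = k + 1 by omega]
        exact mv
      · rw [gr_low k (1 + j) (by omega) (by omega),
          show k + 2 - j.natAbs + 1 = k + 2 - (1 + j).natAbs by omega]
        exact Submodule.mem_span_singleton_self _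
  · -- i = 0
    rw [gr_zero] at ha
    rcases hj with rfl | rfl | rfl | ⟨hja, hjb'⟩
    · -- (0,1)
      rw [gr_one] at hb
      refine span_lie _ _ _ ?_ a ha b hb
      intro x hx y hy
      simp only [Set.mem_singleton_iff, Set.mem_insert_iff] at hx hy
      subst hy
      rw [show (0:ℤ) + 1 = 1 from rfl, gr_one]
      rcases hx with rfl | rfl
      · rw [← lie_skew, lYH]; exact Submodule.neg_mem _ (Submodule.smul_mem _ _ mY)
      · rw [← lie_skew, lYZ, neg_zero]; exact Submodule.zero_mem _
    · -- (0,0)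
      rw [gr_zero] at hb
      refine span_lie _ _ _ ?_ a ha b hb
      intro x hx y hy
      simp only [Set.mem_insert_iff, Set.mem_singleton_iff] at hx hy
      rcases hx with rfl | rfl <;> rcases hy with rfl | rfl
      · rw [lie_self]; exact Submodule.zero_mem _
      · rw [lHZ]; exact Submodule.zero_mem _
      · rw [← lie_skew, lHZ, neg_zero]; exact Submodule.zero_mem _
      · rw [lie_self]; exact Submodule.zero_mem _
    · -- (0,-1)
      rw [gr_neg_one] at hb
      refine span_lie _ _ _ ?_ a ha b hb
      intro x hx y hy
      simp only [Set.mem_insert_iff, Set.mem_singleton_iff] at hx hy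
      rw [show (0:ℤ) + -1 = -1 from rfl, gr_neg_one]
      rcases hx with rfl | rfl <;> rcases hy with rfl | rfl
      · rw [lHX]; exact Submodule.smul_mem _ _ mX
      · rw [lHv k (k+1) le_rfl]; exact Submodule.smul_mem _ _ mv
      · rw [lZX]; exact Submodule.zero_mem _
      · rw [lZv k (k+1) le_rfl]; exact Submodule.smul_mem _ _ mv
    · -- (0, low)
      rw [gr_low k j hjb' hja] at hb
      refine span_lie _ _ _ ?_ a ha b hb
      intro x hx y hy
      simp only [Set.mem_insert_iff, Set.mem_singleton_iff] at hx hy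
      subst hy
      rw [show (0:ℤ) + j = j by ring, gr_low k j hjb' hja]
      rcases hx with rfl | rfl
      · rw [lHv k _ (show k + 2 - j.natAbs ≤ k + 1 by omega)]
        exact Submodule.smul_mem _ _ (Submodule.mem_span_singleton_self _)
      · rw [lZv k _ (show k + 2 - j.natAbs ≤ k + 1 by omega)]
        exact Submodule.smul_mem _ _ (Submodule.mem_span_singleton_self _)
  · -- i = -1
    rw [gr_neg_one] at ha
    rcases hj with rfl | rfl | rfl | ⟨hja, hjb'⟩
    · -- (-1,1)
      rw [gr_one] at hb
      refine span_lie _ _ _ ?_ a ha b hb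
      intro x hx y hy
      simp only [Set.mem_insert_iff, Set.mem_singleton_iff] at hx hy
      subst hy
      rw [show (-1:ℤ) + 1 = 0 from rfl, gr_zero]
      rcases hx with rfl | rfl
      · rw [lXY]; exact mH
      · rw [← lie_skew, lYv_top, neg_zero]; exact Submodule.zero_mem _
    · -- (-1,0)
      rw [gr_zero] at hb
      refine span_lie _ _ _ ?_ a ha b hb
      intro x hx y hy
      simp only [Set.mem_insert_iff, Set.mem_singleton_iff] at hx hy
      rw [show (-1:ℤ) + 0 = -1 from rfl, gr_neg_one]
      rcases hx with rfl | rfl <;> rcases hy with rfl | rfl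
      · rw [← lie_skew, lHX]; exact Submodule.neg_mem _ (Submodule.smul_mem _ _ mX)
      · rw [← lie_skew, lZX, neg_zero]; exact Submodule.zero_mem _
      · rw [← lie_skew, lHv k (k+1) le_rfl]
        exact Submodule.neg_mem _ (Submodule.smul_mem _ _ mv)
      · rw [← lie_skew, lZv k (k+1) le_rfl]
        exact Submodule.neg_mem _ (Submodule.smul_mem _ _ mv)
    · -- (-1,-1)
      rw [gr_neg_one] at hb
      refine span_lie _ _ _ ?_ a ha b hb
      intro x hx y hy
      simp only [Set.mem_insert_iff, Set.mem_singleton_iff] at hx hy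
      rw [show (-1:ℤ) + -1 = -2 from rfl, gr_low k (-2) (by omega) (by omega)]
      rcases hx with rfl | rfl <;> rcases hy with rfl | rfl
      · rw [lie_self]; exact Submodule.zero_mem _
      · rw [lXv k (k+1) (by omega) le_rfl,
          show k + 1 - 1 = k + 2 - (-2:ℤ).natAbs by omega]
        exact Submodule.mem_span_singleton_self _
      · rw [← lie_skew, lXv k (k+1) (by omega) le_rfl,
          show k + 1 - 1 = k + 2 - (-2:ℤ).natAbs by omega]
        exact Submodule.neg_mem _ (Submodule.mem_span_singleton_self _)
      · rw [lie_self]; exact Submodule.zero_mem _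
    · -- (-1, low)
      rw [gr_low k j hjb' hja] at hb
      refine span_lie _ _ _ ?_ a ha b hb
      intro x hx y hy
      simp only [Set.mem_insert_iff, Set.mem_singleton_iff] at hx hy
      subst hy
      rcases hx with rfl | rfl
      · by_cases h2 : j = -(k:ℤ) - 2
        · subst h2
          rw [show k + 2 - (-(k:ℤ) - 2).natAbs = 0 by omega, lXv0]
          exact Submodule.zero_mem _
        · rw [lXv k _ (by omega) (by omega), gr_low k (-1 + j) (by omega) (by omega),
            show k + 2 - j.natAbs - 1 = k + 2 - (-1 + j).natAbs by omega]
          exact Submodule.mem_span_singleton_self _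
      · rw [lvv k (k+1) _ le_rfl (by omega)]
        exact Submodule.zero_mem _
  · -- i low
    rw [gr_low k i hib' hia] at ha
    rcases hj with rfl | rfl | rfl | ⟨hja, hjb'⟩
    · -- (low, 1)
      rw [gr_one] at hb
      refine span_lie _ _ _ ?_ a ha b hb
      intro x hx y hy
      simp only [Set.mem_singleton_iff] at hx hy; subst hx; subst hy
      rw [← lie_skew, lYv k _ (show k + 2 - i.natAbs ≤ k + 1 by omega)]
      apply Submodule.neg_mem
      apply Submodule.smul_mem
      by_cases h2 : i = -2
      · subst h2
        rw [show (-2:ℤ) + 1 = -1 from rfl, gr_neg_one,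
          show k + 2 - (-2:ℤ).natAbs + 1 = k + 1 by omega]
        exact mv
      · rw [gr_low k (i + 1) (by omega) (by omega),
          show k + 2 - i.natAbs + 1 = k + 2 - (i + 1).natAbs by omega]
        exact Submodule.mem_span_singleton_self _
    · -- (low, 0)
      rw [gr_zero] at hb
      refine span_lie _ _ _ ?_ a ha b hb
      intro x hx y hy
      simp only [Set.mem_insert_iff, Set.mem_singleton_iff] at hx hy
      subst hx
      rw [show i + 0 = i by ring, gr_low k i hib' hia]
      rcases hy with rfl | rfl
      · rw [← lie_skew, lHv k _ (show k + 2 - i.natAbs ≤ k + 1 by omega)]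
        exact Submodule.neg_mem _ (Submodule.smul_mem _ _ (Submodule.mem_span_singleton_self _))
      · rw [← lie_skew, lZv k _ (show k + 2 - i.natAbs ≤ k + 1 by omega)]
        exact Submodule.neg_mem _ (Submodule.smul_mem _ _ (Submodule.mem_span_singleton_self _))
    · -- (low, -1)
      rw [gr_neg_one] at hb
      refine span_lie _ _ _ ?_ a ha b hb
      intro x hx y hy
      simp only [Set.mem_insert_iff, Set.mem_singleton_iff] at hx hy
      subst hx
      rcases hy with rfl | rfl
      · by_cases h2 : i = -(k:ℤ) - 2
        · subst h2
          rw [show k + 2 - (-(k:ℤ) - 2).natAbs = 0 by omega, ← lie_skew, lXv0, neg_zero]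
          exact Submodule.zero_mem _
        · rw [← lie_skew, lXv k _ (by omega) (by omega), gr_low k (i + -1) (by omega) (by omega),
            show k + 2 - i.natAbs - 1 = k + 2 - (i + -1).natAbs by omega]
          exact Submodule.neg_mem _ (Submodule.mem_span_singleton_self _)
      · rw [lvv k _ (k+1) (by omega) le_rfl]
        exact Submodule.zero_mem _
    · -- (low, low)
      rw [gr_low k j hjb' hja] at hb
      refine span_lie _ _ _ ?_ a ha b hb
      intro x hx y hy
      simp only [Set.mem_singleton_iff] at hx hy; subst hx; subst hy
      rw [lvv k _ _ (by omega) (by omega)]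
      exact Submodule.zero_mem _
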